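/- arXiv:2402.19234 — 2 statements merged into one kernel-verified Lean document; each statement's English description precedes it below -/
import Mathlib

section
/- Let n = qa + r with r ∈ {0, a-1} and 3 ≤ q < a-1, and let f be an independent broadcast on C⃗(n;1,a) with f(v) ≤ q for all v. Let V¹ = {v : f(v) = q}. Then Σ_v f(v) ≤ ⌊((q-1)/q)·n⌋ - (q-2)|V¹| when r = 0, and Σ_v f(v) ≤ ⌊((q-1)/q)·(n - |V¹|)⌋ - (q-2)|V¹| when r = a-1. -/
set_option linter.unusedVariables false
set_option maxHeartbeats 1000000


/-- Arc relation of the oriented circulant graph C⃗(n;1,a): arcs u → u+1 and u → u+a (mod n). -/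
def circArc (n : ℕ) (a : ℤ) (u v : ZMod n) : Prop :=
  v = u + 1 ∨ v = u + (a : ZMod n)

/-- There is a directed walk of length k from u to v in C⃗(n;1,a). -/
def circSteps (n : ℕ) (a : ℤ) (u v : ZMod n) (k : ℕ) : Prop :=
  ∃ g : ℕ → ZMod n, g 0 = u ∧ g k = v ∧ ∀ i < k, circArc n a (g i) (g (i + 1))

/-- Directed distance: length of a shortest directed path from u to v. -/
noncomputable def circDist (n : ℕ) (a : ℤ) (u v : ZMod n) : ℕ :=
  sInf {k | circSteps n a u v k}

/-- Eccentricity of a vertex: maximum distance from it to any vertex. -/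
noncomputable def circEcc (n : ℕ) (a : ℤ) (u : ZMod n) : ℕ :=
  sSup {d | ∃ v, d = circDist n a u v}

/-- Diameter: maximum eccentricity. -/
noncomputable def circDiam (n : ℕ) (a : ℤ) : ℕ :=
  sSup {d | ∃ u, d = circEcc n a u}

/-- f is an independent broadcast on C⃗(n;1,a). -/
def IsIndepBroadcast (n : ℕ) (a : ℤ) (f : ZMod n → ℕ) : Prop :=
  (∀ v, f v ≤ circEcc n a v) ∧
  ∀ u v : ZMod n, u ≠ v → 0 < f u → 0 < f v → f u < circDist n a u v

/-- Cost of a broadcast: sum of its values over all vertices. -/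
def circCost (n : ℕ) (f : ZMod n → ℕ) : ℕ :=
  ∑ i ∈ Finset.range n, f (i : ZMod n)

/-- The broadcast independence number of C⃗(n;1,a). -/
noncomputable def betaB (n : ℕ) (a : ℤ) : ℕ :=
  sSup {c | ∃ f : ZMod n → ℕ, IsIndepBroadcast n a f ∧ c = circCost n f}

lemma circSteps_zero (n : ℕ) (A : ℤ) (u : ZMod n) : circSteps n A u u 0 :=
  ⟨fun _ => u, rfl, rfl, fun i h => absurd h (Nat.not_lt_zero i)⟩

lemma circSteps_snoc {n : ℕ} {A : ℤ} {u v w : ZMod n} {k : ℕ}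
    (h : circSteps n A u v k) (hw : circArc n A v w) :
    circSteps n A u w (k + 1) := by
  obtain ⟨g, h0, hk, harc⟩ := h
  refine ⟨fun i => if i = k + 1 then w else g i, by simp [h0], by simp, ?_⟩
  intro i hi
  by_cases hik : i = k
  · subst hik
    simp only [if_neg (by omega : ¬ i = i + 1), if_pos rfl, ← hk]
    rw [hk]; exact hw
  · simp only [if_neg (by omega : ¬ i = k + 1), if_neg (by omega : ¬ i + 1 = k + 1)]
    exact harc i (by omega)

lemma circSteps_ones {n : ℕ} {A : ℤ} (u : ZMod n) (t : ℕ) :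
    circSteps n A u (u + (t : ZMod n)) t := by
  induction t with
  | zero => simpa using circSteps_zero n A u
  | succ t ih =>
      have h := circSteps_snoc ih (Or.inl rfl)
      have he : u + ((t + 1 : ℕ) : ZMod n) = u + (t : ZMod n) + 1 := by push_cast; ring
      rw [he]; exact h

lemma circSteps_tsa {n : ℕ} {A : ℤ} (u : ZMod n) (t s : ℕ) :
    circSteps n A u (u + (t : ZMod n) + (s : ZMod n) * (A : ZMod n)) (t + s) := by
  induction s with
  | zero => simpa using circSteps_ones u t
  | succ s ih =>
      have h := circSteps_snoc ih (Or.inr rfl)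
      have he : u + (t : ZMod n) + ((s + 1 : ℕ) : ZMod n) * (A : ZMod n)
          = u + (t : ZMod n) + (s : ZMod n) * (A : ZMod n) + (A : ZMod n) := by push_cast; ring
      rw [he]; exact h

lemma circDist_le {n : ℕ} {A : ℤ} {u v : ZMod n} {t s : ℕ}
    (h : v = u + (t : ZMod n) + (s : ZMod n) * (A : ZMod n)) :
    circDist n A u v ≤ t + s :=
  Nat.sInf_le (by rw [Set.mem_setOf_eq, h]; exact circSteps_tsa u t s)

lemma sum_L_le {ι : Type} [DecidableEq ι] {M : ℕ} [NeZero M] (T : Finset ι)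
    (p : ι → ZMod M) (L : ι → ℕ)
    (hL : ∀ x ∈ T, L x ≤ M)
    (hsep : ∀ x ∈ T, ∀ y ∈ T, x ≠ y → ∀ d : ℕ, d < L x → p y ≠ p x + (d : ZMod M)) :
    ∑ x ∈ T, L x ≤ M := by
  classical
  set I : ι → Finset (ZMod M) := fun x => (Finset.range (L x)).image (fun d : ℕ => p x + (d : ZMod M)) with hI
  have hcard : ∀ x ∈ T, (I x).card = L x := by
    intro x hx
    rw [hI]
    rw [Finset.card_image_of_injOn, Finset.card_range]
    intro d hd e he hde
    simp only [Finset.coe_range, Set.mem_Iio] at hd he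
    have h1 : (d : ZMod M) = (e : ZMod M) := add_left_cancel hde
    have hd' : d < M := lt_of_lt_of_le hd (hL x hx)
    have he' : e < M := lt_of_lt_of_le he (hL x hx)
    have := congrArg ZMod.val h1
    rwa [ZMod.val_natCast_of_lt hd', ZMod.val_natCast_of_lt he'] at this
  have hdisj : ∀ x ∈ T, ∀ y ∈ T, x ≠ y → Disjoint (I x) (I y) := by
    intro x hx y hy hxy
    rw [Finset.disjoint_left]
    intro z hzx hzy
    simp only [hI, Finset.mem_image, Finset.mem_range] at hzx hzy
    obtain ⟨dx, hdx, hex⟩ := hzx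
    obtain ⟨dy, hdy, hey⟩ := hzy
    rcases le_total dy dx with hle | hle
    · apply hsep x hx y hy hxy (dx - dy) (by omega)
      have h0 : p y + (dy : ZMod M) = p x + (dx : ZMod M) := by rw [hex, hey]
      have hc : ((dx - dy : ℕ) : ZMod M) = (dx : ZMod M) - (dy : ZMod M) := by
        push_cast [Nat.cast_sub hle]; ring
      rw [hc]; linear_combination h0
    · apply hsep y hy x hx hxy.symm (dy - dx) (by omega)
      have h0 : p x + (dx : ZMod M) = p y + (dy : ZMod M) := by rw [hex, hey]
      have hc : ((dy - dx : ℕ) : ZMod M) = (dy : ZMod M) - (dx : ZMod M) := by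
        push_cast [Nat.cast_sub hle]; ring
      rw [hc]; linear_combination h0
  calc ∑ x ∈ T, L x = ∑ x ∈ T, (I x).card := Finset.sum_congr rfl (fun x hx => (hcard x hx).symm)
    _ = (T.biUnion I).card := (Finset.card_biUnion hdisj).symm
    _ ≤ Fintype.card (ZMod M) := Finset.card_le_univ _
    _ = M := ZMod.card M

theorem stmt15 (n a q r : ℕ) (hn : n = q * a + r) (hr : r = 0 ∨ r = a - 1)
    (hq : 3 ≤ q) (hqa : q < a - 1)
    (f : ZMod n → ℕ) (hf : IsIndepBroadcast n (a : ℤ) f)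
    (hbd : ∀ v, f v ≤ q) :
    (r = 0 →
      (circCost n f : ℤ) ≤
        ((q : ℤ) - 1) * (n : ℤ) / (q : ℤ) -
          ((q : ℤ) - 2) * ((Finset.range n).filter (fun i : ℕ => f (i : ZMod n) = q)).card) ∧
    (r = a - 1 →
      (circCost n f : ℤ) ≤
        ((q : ℤ) - 1) * ((n : ℤ) -
            ((Finset.range n).filter (fun i : ℕ => f (i : ZMod n) = q)).card) / (q : ℤ) -
          ((q : ℤ) - 2) * ((Finset.range n).filter (fun i : ℕ => f (i : ZMod n) = q)).card) := by
  have ha5 : 5 ≤ a := by omega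
  have ha0 : 0 < a := by omega
  have hq0 : 0 < q := by omega
  have hqa2 : q + 2 ≤ a := by omega
  have hn15 : 15 ≤ q * a := le_trans (by norm_num) (Nat.mul_le_mul hq ha5)
  have hnpos : 0 < n := by omega
  haveI : NeZero n := ⟨by omega⟩
  have castinj : ∀ x y : ℕ, x < n → y < n → (x : ZMod n) = (y : ZMod n) → x = y := by
    intro x y hx hy h
    have h2 := congrArg ZMod.val h
    rwa [ZMod.val_natCast_of_lt hx, ZMod.val_natCast_of_lt hy] at h2
  have pairkey : ∀ x y t s : ℕ, x < n → y < n → x ≠ y → 0 < f (x : ZMod n) → 0 < f (y : ZMod n) →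
      ((y : ZMod n) = (x : ZMod n) + (t : ZMod n) + (s : ZMod n) * ((a : ℕ) : ZMod n)) →
      f (x : ZMod n) + 1 ≤ t + s := by
    intro x y t s hx hy hne hfx hfy h
    have hne' : (x : ZMod n) ≠ (y : ZMod n) := fun hc => hne (castinj x y hx hy hc)
    have hd := hf.2 _ _ hne' hfx hfy
    have hle : circDist n (a : ℤ) (x : ZMod n) (y : ZMod n) ≤ t + s := by
      apply circDist_le
      push_cast
      exact h
    omega
  set V1 := (Finset.range n).filter (fun i : ℕ => f (i : ZMod n) = q) with hV1
  set m := V1.card with hm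
  constructor
  · -- case r = 0
    intro hr0
    have hn' : n = q * a := by omega
    -- keySame : pair constraint for vertices in the same column
    have keySame : ∀ x y : ℕ, x < n → y < n → x ≠ y → 0 < f (x : ZMod n) → 0 < f (y : ZMod n) →
        x % a = y % a → f (x : ZMod n) + 1 ≤ (y / a + q - x / a) % q := by
      intro x y hx hy hne hfx hfy hcol
      have hxa : x / a < q := (Nat.div_lt_iff_lt_mul ha0).mpr (by omega)
      have hya : y / a < q := (Nat.div_lt_iff_lt_mul ha0).mpr (by omega)
      have hmx := Nat.div_add_mod x a
      have hmy := Nat.div_add_mod y a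
      have hcm : q * a = a * q := Nat.mul_comm q a
      obtain ⟨K, hKdef⟩ : ∃ K, K = y / a + q - x / a := ⟨_, rfl⟩
      rw [← hKdef]
      have hKx : K + x / a = y / a + q := by
        generalize x / a = u at *
        generalize y / a = v at *
        omega
      have h1 : a * K + a * (x / a) = a * (y / a) + a * q := by
        rw [← Nat.mul_add, hKx, Nat.mul_add]
      have hE : y + n - x = a * K := by
        generalize q * a = W at *
        generalize a * K = P at *
        generalize a * (x / a) = Q at *
        generalize a * (y / a) = R at *
        generalize a * q = S at *
        generalize x % a = xr at *
        generalize y % a = yr at *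
        omega
      obtain ⟨KQ, hKQ⟩ : ∃ KQ, KQ = K % q := ⟨_, rfl⟩
      have hKQlt : KQ < q := by rw [hKQ]; exact Nat.mod_lt _ hq0
      have hmod : (y + n - x) % n = a * KQ := by
        rw [hE, hn', Nat.mul_comm q a, Nat.mul_mod_mul_left, ← hKQ]
      have hc : (((y + n - x) % n : ℕ) : ZMod n) = (y : ZMod n) - (x : ZMod n) := by
        rw [ZMod.natCast_mod]
        push_cast [Nat.cast_sub (by omega : x ≤ y + n)]
        rw [ZMod.natCast_self]
        ring
      have heq : (y : ZMod n) = (x : ZMod n) + ((0 : ℕ) : ZMod n)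
          + ((KQ : ℕ) : ZMod n) * ((a : ℕ) : ZMod n) := by
        have h3 : ((a * KQ : ℕ) : ZMod n) = (y : ZMod n) - (x : ZMod n) := by
          rw [← hmod, hc]
        push_cast at h3 ⊢
        linear_combination -h3
      have hp := pairkey x y 0 KQ hx hy hne hfx hfy heq
      omega
    -- keyPlus : no broadcast vertex in the column right after a column with an f = q vertex
    have keyPlus : ∀ x y : ℕ, x < n → y < n → 0 < f (y : ZMod n) → f (x : ZMod n) = q →
        y % a = (x % a + 1) % a → False := by
      intro x y hx hy hfy hfxq hcol
      have hx1 : x % a < a := Nat.mod_lt _ ha0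
      have hy1 : y % a < a := Nat.mod_lt _ ha0
      have hne : x ≠ y := by
        intro h; subst h
        by_cases hxa : x % a = a - 1
        · rw [hxa, (by omega : a - 1 + 1 = a), Nat.mod_self] at hcol; omega
        · rw [Nat.mod_eq_of_lt (by omega : x % a + 1 < a)] at hcol; omega
      have hxa : x / a < q := (Nat.div_lt_iff_lt_mul ha0).mpr (by omega)
      have hya : y / a < q := (Nat.div_lt_iff_lt_mul ha0).mpr (by omega)
      have hmx := Nat.div_add_mod x a
      have hmy := Nat.div_add_mod y a
      have hcm : q * a = a * q := Nat.mul_comm q a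
      have final : ∀ K : ℕ, y + n - x = a * K + 1 → False := by
        intro K hE
        obtain ⟨KQ, hKQ⟩ : ∃ KQ, KQ = K % q := ⟨_, rfl⟩
        have hKQlt : KQ < q := by rw [hKQ]; exact Nat.mod_lt _ hq0
        have h1' : (a * K) % (a * q) = a * KQ := by rw [Nat.mul_mod_mul_left, ← hKQ]
        have h2 : a * KQ + 1 < a * q := by
          have h3 : a * (KQ + 1) ≤ a * q := Nat.mul_le_mul_left a (by omega)
          rw [Nat.mul_add, Nat.mul_one] at h3
          omega
        have hmod : (y + n - x) % n = a * KQ + 1 := by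
          rw [hE, hn', Nat.mul_comm q a, Nat.add_mod, h1',
            Nat.mod_eq_of_lt (show (1 : ℕ) < a * q by omega), Nat.mod_eq_of_lt h2]
        have hc : (((y + n - x) % n : ℕ) : ZMod n) = (y : ZMod n) - (x : ZMod n) := by
          rw [ZMod.natCast_mod]
          push_cast [Nat.cast_sub (by omega : x ≤ y + n)]
          rw [ZMod.natCast_self]
          ring
        have heq : (y : ZMod n) = (x : ZMod n) + ((1 : ℕ) : ZMod n)
            + ((KQ : ℕ) : ZMod n) * ((a : ℕ) : ZMod n) := by
          have h3 : ((a * KQ + 1 : ℕ) : ZMod n) = (y : ZMod n) - (x : ZMod n) := by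
            rw [← hmod, hc]
          push_cast at h3 ⊢
          linear_combination -h3
        have hp := pairkey x y 1 KQ hx hy hne (by omega) hfy heq
        omega
      by_cases hca : x % a = a - 1
      · have hy0 : y % a = 0 := by
          rw [hcol, hca, (by omega : a - 1 + 1 = a), Nat.mod_self]
        obtain ⟨K, hKdef⟩ : ∃ K, K = y / a + q - (x / a + 1) := ⟨_, rfl⟩
        have hKx : K + (x / a + 1) = y / a + q := by
          generalize x / a = u at *
          generalize y / a = v at *
          omega
        have h1 : a * K + a * (x / a + 1) = a * (y / a) + a * q := by
          rw [← Nat.mul_add, hKx, Nat.mul_add]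
        rw [Nat.mul_add, Nat.mul_one] at h1
        apply final K
        generalize q * a = W at *
        generalize a * K = P at *
        generalize a * (x / a) = Q at *
        generalize a * (y / a) = R at *
        generalize a * q = S at *
        generalize x % a = xr at *
        generalize y % a = yr at *
        omega
      · have hy0 : y % a = x % a + 1 := by
          rw [hcol, Nat.mod_eq_of_lt (by omega : x % a + 1 < a)]
        obtain ⟨K, hKdef⟩ : ∃ K, K = y / a + q - x / a := ⟨_, rfl⟩
        have hKx : K + x / a = y / a + q := by
          generalize x / a = u at *
          generalize y / a = v at *
          omega
        have h1 : a * K + a * (x / a) = a * (y / a) + a * q := by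
          rw [← Nat.mul_add, hKx, Nat.mul_add]
        apply final K
        generalize q * a = W at *
        generalize a * K = P at *
        generalize a * (x / a) = Q at *
        generalize a * (y / a) = R at *
        generalize a * q = S at *
        generalize x % a = xr at *
        generalize y % a = yr at *
        omega
    have hmemV1 : ∀ u : ℕ, u ∈ V1 ↔ u < n ∧ f (u : ZMod n) = q := by
      intro u; rw [hV1]; simp [Finset.mem_filter, Finset.mem_range]
    set S1 := V1.image (fun u => u % a) with hS1
    set S2 := V1.image (fun u => (u % a + 1) % a) with hS2
    have hinj1 : Set.InjOn (fun u => u % a) V1 := by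
      intro u hu v hv huv
      by_contra hne
      have hu' := (hmemV1 u).mp (Finset.mem_coe.mp hu)
      have hv' := (hmemV1 v).mp (Finset.mem_coe.mp hv)
      have hks := keySame u v hu'.1 hv'.1 hne (by omega) (by omega) huv
      have hlt : (v / a + q - u / a) % q < q := Nat.mod_lt _ hq0
      omega
    have hcard1 : S1.card = m := by rw [hS1, Finset.card_image_of_injOn hinj1, hm]
    have succinj : ∀ w1 w2 : ℕ, w1 < a → w2 < a → (w1 + 1) % a = (w2 + 1) % a → w1 = w2 := by
      intro w1 w2 h1 h2 h
      by_cases e1 : w1 = a - 1 <;> by_cases e2 : w2 = a - 1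
      · omega
      · rw [e1, (by omega : a - 1 + 1 = a), Nat.mod_self, Nat.mod_eq_of_lt (by omega)] at h
        omega
      · rw [e2, (by omega : a - 1 + 1 = a), Nat.mod_self, Nat.mod_eq_of_lt (by omega)] at h
        omega
      · rw [Nat.mod_eq_of_lt (by omega), Nat.mod_eq_of_lt (by omega)] at h
        omega
    have hinj2 : Set.InjOn (fun u => (u % a + 1) % a) V1 := by
      intro u hu v hv huv
      exact hinj1 hu hv (succinj _ _ (Nat.mod_lt _ ha0) (Nat.mod_lt _ ha0) huv)
    have hcard2 : S2.card = m := by rw [hS2, Finset.card_image_of_injOn hinj2, hm]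
    have hdisj12 : Disjoint S1 S2 := by
      rw [Finset.disjoint_left]
      intro c hc1 hc2
      obtain ⟨u, hu, huc⟩ := Finset.mem_image.mp hc1
      obtain ⟨v, hv, hvc⟩ := Finset.mem_image.mp hc2
      have hu' := (hmemV1 u).mp hu
      have hv' := (hmemV1 v).mp hv
      exact keyPlus v u hv'.1 hu'.1 (by omega) hv'.2 (by omega)
    have hsubU : S1 ∪ S2 ⊆ Finset.range a := by
      intro c hc
      rcases Finset.mem_union.mp hc with h | h
      · obtain ⟨u, hu, huc⟩ := Finset.mem_image.mp h
        exact Finset.mem_range.mpr (by have := Nat.mod_lt u ha0; omega)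
      · obtain ⟨u, hu, huc⟩ := Finset.mem_image.mp h
        exact Finset.mem_range.mpr (by have := Nat.mod_lt (u % a + 1) ha0; omega)
    have hfibsum := Finset.sum_fiberwise_of_maps_to (s := Finset.range n)
        (t := Finset.range a) (g := fun i => i % a)
        (fun i _ => Finset.mem_range.mpr (Nat.mod_lt _ ha0)) (fun i => f (i : ZMod n))
    have hbS1 : ∀ c ∈ S1,
        (∑ i ∈ (Finset.range n).filter (fun i => i % a = c), f (i : ZMod n)) ≤ q := by
      intro c hc
      obtain ⟨u, hu, huc⟩ := Finset.mem_image.mp hc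
      have hu' := (hmemV1 u).mp hu
      have husum : (∑ i ∈ (Finset.range n).filter (fun i => i % a = c), f (i : ZMod n))
          = f (u : ZMod n) := by
        refine Finset.sum_eq_single_of_mem u ?_ ?_
        · exact Finset.mem_filter.mpr ⟨Finset.mem_range.mpr hu'.1, huc⟩
        intro i hi hiu
        obtain ⟨hirange, hic⟩ := Finset.mem_filter.mp hi
        have hin := Finset.mem_range.mp hirange
        by_contra h0
        have hpos : 0 < f (i : ZMod n) := Nat.pos_of_ne_zero h0
        have hks := keySame u i hu'.1 hin (Ne.symm hiu) (by omega) hpos (by omega)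
        have hlt : (i / a + q - u / a) % q < q := Nat.mod_lt _ hq0
        omega
      rw [husum]; exact hbd _
    have hbS2 : ∀ c ∈ S2,
        (∑ i ∈ (Finset.range n).filter (fun i => i % a = c), f (i : ZMod n)) = 0 := by
      intro c hc
      obtain ⟨u, hu, huc⟩ := Finset.mem_image.mp hc
      have hu' := (hmemV1 u).mp hu
      apply Finset.sum_eq_zero
      intro i hi
      obtain ⟨hirange, hic⟩ := Finset.mem_filter.mp hi
      have hin := Finset.mem_range.mp hirange
      by_contra h0
      exact keyPlus u i hu'.1 hin (Nat.pos_of_ne_zero h0) hu'.2 (by omega)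
    have hbRest : ∀ c ∈ Finset.range a \ (S1 ∪ S2),
        (∑ i ∈ (Finset.range n).filter (fun i => i % a = c), f (i : ZMod n)) ≤ q - 1 := by
      intro c hc
      obtain ⟨hcr, hcU⟩ := Finset.mem_sdiff.mp hc
      have hcS1 : c ∉ S1 := fun h => hcU (Finset.mem_union_left _ h)
      have hfq : ∀ i, i < n → i % a = c → f (i : ZMod n) ≠ q := by
        intro i hin hic hiq
        exact hcS1 (Finset.mem_image.mpr ⟨i, (hmemV1 i).mpr ⟨hin, hiq⟩, hic⟩)
      haveI : NeZero q := ⟨by omega⟩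
      set T := ((Finset.range n).filter (fun i => i % a = c)).filter
        (fun i : ℕ => 0 < f (i : ZMod n)) with hT
      have hmemT : ∀ i ∈ T, i < n ∧ i % a = c ∧ 0 < f (i : ZMod n) := by
        intro i hi
        obtain ⟨hi1, hi2⟩ := Finset.mem_filter.mp hi
        obtain ⟨hi3, hi4⟩ := Finset.mem_filter.mp hi1
        exact ⟨Finset.mem_range.mp hi3, hi4, hi2⟩
      have hL : ∀ i ∈ T, f (i : ZMod n) + 1 ≤ q := by
        intro i hi
        obtain ⟨h1, h2, h3⟩ := hmemT i hi
        have hb1 := hbd (i : ZMod n)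
        have hb2 := hfq i h1 h2
        omega
      have hsep : ∀ x ∈ T, ∀ y ∈ T, x ≠ y → ∀ d : ℕ, d < f (x : ZMod n) + 1 →
          ((y / a : ℕ) : ZMod q) ≠ ((x / a : ℕ) : ZMod q) + (d : ZMod q) := by
        intro x hxT y hyT hxy d hd hp
        obtain ⟨hxn, hxc, hxpos⟩ := hmemT x hxT
        obtain ⟨hyn, hyc, hypos⟩ := hmemT y hyT
        have hks := keySame x y hxn hyn hxy hxpos hypos (by omega)
        have hdq : d < q := by
          have hb1 := hbd (x : ZMod n)
          have hb2 := hfq x hxn hxc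
          omega
        have hxa2 : x / a < q := (Nat.div_lt_iff_lt_mul ha0).mpr (by omega)
        have h1 : (((y / a + q - x / a) % q : ℕ) : ZMod q) = (d : ZMod q) := by
          rw [ZMod.natCast_mod]
          push_cast [Nat.cast_sub (le_trans (le_of_lt hxa2) (Nat.le_add_left q (y / a)))]
          rw [ZMod.natCast_self]
          linear_combination hp
        have hKlt : (y / a + q - x / a) % q < q := Nat.mod_lt _ hq0
        have h2 := congrArg ZMod.val h1
        rw [ZMod.val_natCast_of_lt hKlt, ZMod.val_natCast_of_lt hdq] at h2
        omega
      have hsum := sum_L_le T (fun i => ((i / a : ℕ) : ZMod q))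
        (fun i => f (i : ZMod n) + 1) hL hsep
      have hTsum : ∑ i ∈ T, f (i : ZMod n)
          = ∑ i ∈ (Finset.range n).filter (fun i => i % a = c), f (i : ZMod n) := by
        rw [hT]
        exact Finset.sum_filter_of_ne (fun x hx hfx => Nat.pos_of_ne_zero hfx)
      have hsplit : ∑ i ∈ T, (f (i : ZMod n) + 1) = (∑ i ∈ T, f (i : ZMod n)) + T.card := by
        rw [Finset.sum_add_distrib, Finset.sum_const, smul_eq_mul, mul_one]
      rcases Finset.eq_empty_or_nonempty T with hTe | hTne
      · rw [← hTsum, hTe]; simp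
      · have hTc := Finset.card_pos.mpr hTne
        have hsum' : ∑ i ∈ T, (f (i : ZMod n) + 1) ≤ q := hsum
        rw [← hTsum]
        omega
    have hsplitsum := Finset.sum_sdiff (f := fun c =>
      ∑ i ∈ (Finset.range n).filter (fun i => i % a = c), f (i : ZMod n)) hsubU
    have hUsum := Finset.sum_union (f := fun c =>
      ∑ i ∈ (Finset.range n).filter (fun i => i % a = c), f (i : ZMod n)) hdisj12
    have hb1 : ∑ c ∈ S1, (∑ i ∈ (Finset.range n).filter (fun i => i % a = c), f (i : ZMod n))
        ≤ m * q := by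
      have h := Finset.sum_le_card_nsmul S1 _ q hbS1
      rwa [hcard1, smul_eq_mul] at h
    have hb2 : ∑ c ∈ S2, (∑ i ∈ (Finset.range n).filter (fun i => i % a = c), f (i : ZMod n))
        = 0 := Finset.sum_eq_zero hbS2
    have hb3 : ∑ c ∈ Finset.range a \ (S1 ∪ S2),
        (∑ i ∈ (Finset.range n).filter (fun i => i % a = c), f (i : ZMod n))
        ≤ (a - 2 * m) * (q - 1) := by
      have h := Finset.sum_le_card_nsmul (Finset.range a \ (S1 ∪ S2)) _ (q - 1) hbRest
      have hcardsd : (Finset.range a \ (S1 ∪ S2)).card = a - 2 * m := by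
        rw [Finset.card_sdiff_of_subset hsubU, Finset.card_range,
          Finset.card_union_of_disjoint hdisj12, hcard1, hcard2]
        omega
      rwa [hcardsd, smul_eq_mul] at h
    have h2m : 2 * m ≤ a := by
      have hc := Finset.card_le_card hsubU
      rw [Finset.card_union_of_disjoint hdisj12, hcard1, hcard2, Finset.card_range] at hc
      omega
    have hcostN : circCost n f ≤ (a - 2 * m) * (q - 1) + m * q := by
      have htotal : circCost n f = (∑ c ∈ Finset.range a \ (S1 ∪ S2),
          (∑ i ∈ (Finset.range n).filter (fun i => i % a = c), f (i : ZMod n)))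
          + ((∑ c ∈ S1, (∑ i ∈ (Finset.range n).filter (fun i => i % a = c), f (i : ZMod n)))
            + (∑ c ∈ S2, (∑ i ∈ (Finset.range n).filter (fun i => i % a = c), f (i : ZMod n)))) := by
        rw [circCost, ← hfibsum, ← hsplitsum, hUsum]
      rw [htotal, hb2, Nat.add_zero]
      exact Nat.add_le_add hb3 hb1
    have hql : (0 : ℤ) < (q : ℤ) := by exact_mod_cast hq0
    have hdiv : ((q : ℤ) - 1) * (n : ℤ) / (q : ℤ) = ((q : ℤ) - 1) * (a : ℤ) := by
      have hnz : (n : ℤ) = (q : ℤ) * (a : ℤ) := by exact_mod_cast congrArg (Nat.cast : ℕ → ℤ) hn'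
      rw [show ((q : ℤ) - 1) * (n : ℤ) = (((q : ℤ) - 1) * (a : ℤ)) * (q : ℤ) by rw [hnz]; ring,
        Int.mul_ediv_cancel _ (by omega)]
    rw [hdiv]
    have hcz : (circCost n f : ℤ) ≤ ((a : ℤ) - 2 * m) * ((q : ℤ) - 1) + m * q := by
      calc (circCost n f : ℤ) ≤ (((a - 2 * m) * (q - 1) + m * q : ℕ) : ℤ) := by
            exact_mod_cast hcostN
        _ = ((a : ℤ) - 2 * m) * ((q : ℤ) - 1) + m * q := by
            push_cast [Nat.cast_sub h2m, Nat.cast_sub (by omega : 1 ≤ q)]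
            ring
    have hring : ((a : ℤ) - 2 * m) * ((q : ℤ) - 1) + m * q
        = ((q : ℤ) - 1) * a - ((q : ℤ) - 2) * m := by ring
    linarith
  · -- case r = a - 1
    intro hr1
    have hn2 : n = q * a + (a - 1) := by omega
    have hcm : q * a = a * q := Nat.mul_comm q a
    have hna : a * (q + 1) = n + 1 := by
      have h1 : a * (q + 1) = a * q + a := by rw [Nat.mul_add, Nat.mul_one]
      omega
    have h1' : ((a : ZMod n)) * ((q : ZMod n) + 1) = 1 := by
      have h0 : ((a * (q + 1) : ℕ) : ZMod n) = ((n + 1 : ℕ) : ZMod n) := by rw [hna]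
      push_cast at h0
      rw [ZMod.natCast_self] at h0
      linear_combination h0
    have h2q1n : 2 * q + 1 ≤ n := by
      have h3 : q * (q + 2) ≤ q * a := Nat.mul_le_mul_left q hqa2
      have h4 : 3 * (q + 2) ≤ q * (q + 2) := Nat.mul_le_mul_right _ hq
      omega
    set B := (Finset.range n).filter (fun i : ℕ => 0 < f (i : ZMod n)) with hB
    have hmemB : ∀ i ∈ B, i < n ∧ 0 < f (i : ZMod n) := by
      intro i hi
      obtain ⟨h1, h2⟩ := Finset.mem_filter.mp hi
      exact ⟨Finset.mem_range.mp h1, h2⟩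
    have hL : ∀ i ∈ B, (if f (i : ZMod n) = q then 2 * q + 1 else f (i : ZMod n) + 1) ≤ n := by
      intro i hi
      have := hbd (i : ZMod n)
      split_ifs <;> omega
    have hsep : ∀ x ∈ B, ∀ y ∈ B, x ≠ y →
        ∀ d : ℕ, d < (if f (x : ZMod n) = q then 2 * q + 1 else f (x : ZMod n) + 1) →
        (((q + 1) * y : ℕ) : ZMod n) ≠ (((q + 1) * x : ℕ) : ZMod n) + (d : ZMod n) := by
      intro x hx y hy hxy d hd hp
      obtain ⟨hxn, hxpos⟩ := hmemB x hx
      obtain ⟨hyn, hypos⟩ := hmemB y hy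
      have hp' : ((q : ZMod n) + 1) * (y : ZMod n)
          = ((q : ZMod n) + 1) * (x : ZMod n) + (d : ZMod n) := by
        push_cast at hp
        linear_combination hp
      have h2 : (y : ZMod n) = (x : ZMod n) + (a : ZMod n) * (d : ZMod n) := by
        linear_combination (a : ZMod n) * hp' + ((x : ZMod n) - (y : ZMod n)) * h1'
      by_cases hdq : d ≤ q
      · have heq : (y : ZMod n) = (x : ZMod n) + ((0 : ℕ) : ZMod n)
            + ((d : ℕ) : ZMod n) * ((a : ℕ) : ZMod n) := by
          push_cast
          linear_combination h2
        have hpk := pairkey x y 0 d hxn hyn hxy hxpos hypos heq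
        split_ifs at hd with hfxq
        · omega
        · omega
      · have hfxq : f (x : ZMod n) = q := by
          by_contra hne2
          rw [if_neg hne2] at hd
          have := hbd (x : ZMod n)
          omega
        rw [if_pos hfxq] at hd
        have hsub : q + 1 ≤ d := by omega
        have heq : (y : ZMod n) = (x : ZMod n) + ((1 : ℕ) : ZMod n)
            + ((d - (q + 1) : ℕ) : ZMod n) * ((a : ℕ) : ZMod n) := by
          push_cast [Nat.cast_sub hsub]
          linear_combination h2 + h1'
        have hpk := pairkey x y 1 (d - (q + 1)) hxn hyn hxy hxpos hypos heq
        omega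
    have hsum := sum_L_le B (fun i => (((q + 1) * i : ℕ) : ZMod n))
      (fun i => if f (i : ZMod n) = q then 2 * q + 1 else f (i : ZMod n) + 1) hL hsep
    have hfilterB : B.filter (fun i : ℕ => f (i : ZMod n) = q) = V1 := by
      rw [hB, hV1, Finset.filter_filter]
      apply Finset.filter_congr
      intro i hi
      constructor
      · exact And.right
      · exact fun h => ⟨by omega, h⟩
    have hcostB : ∑ i ∈ B, f (i : ZMod n) = circCost n f := by
      rw [hB, circCost]
      exact Finset.sum_filter_of_ne (fun x hx h0 => Nat.pos_of_ne_zero h0)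
    have hqZ : (0 : ℤ) < (q : ℤ) := by exact_mod_cast hq0
    have hptZ : ∀ i ∈ B, (q : ℤ) * (f (i : ZMod n) : ℤ)
        + (if f (i : ZMod n) = q then (q : ℤ) * (q : ℤ) - q - 1 else 0)
        ≤ ((q : ℤ) - 1) * (((if f (i : ZMod n) = q then 2 * q + 1 else f (i : ZMod n) + 1 : ℕ)) : ℤ) := by
      intro i hi
      by_cases h : f (i : ZMod n) = q
      · rw [if_pos h, if_pos h, h]
        push_cast
        linarith [show ((q : ℤ) - 1) * (2 * (q : ℤ) + 1) = (q : ℤ) * q + ((q : ℤ) * q - q - 1) from by ring]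
      · rw [if_neg h, if_neg h]
        have hfi : (f (i : ZMod n) : ℤ) ≤ (q : ℤ) - 1 := by
          have hle : f (i : ZMod n) + 1 ≤ q := by
            have := hbd (i : ZMod n)
            omega
          have hle2 : ((f (i : ZMod n) + 1 : ℕ) : ℤ) ≤ ((q : ℕ) : ℤ) := by exact_mod_cast hle
          push_cast at hle2
          linarith
        push_cast
        linarith [show ((q : ℤ) - 1) * ((f (i : ZMod n) : ℤ) + 1)
          = (q : ℤ) * (f (i : ZMod n) : ℤ) + ((q : ℤ) - 1 - (f (i : ZMod n) : ℤ)) from by ring]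
    have hmainZ : (q : ℤ) * (circCost n f : ℤ) + ((q : ℤ) * (q : ℤ) - q - 1) * m
        ≤ ((q : ℤ) - 1) * n := by
      have hsumZ := Finset.sum_le_sum hptZ
      have hLHS : ∑ i ∈ B, ((q : ℤ) * (f (i : ZMod n) : ℤ)
          + (if f (i : ZMod n) = q then (q : ℤ) * (q : ℤ) - q - 1 else 0))
          = (q : ℤ) * (circCost n f : ℤ) + ((q : ℤ) * (q : ℤ) - q - 1) * m := by
        rw [Finset.sum_add_distrib, ← Finset.mul_sum, ← Finset.sum_filter, hfilterB,
          Finset.sum_const, nsmul_eq_mul]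
        have hc2 : (∑ i ∈ B, (f (i : ZMod n) : ℤ)) = (circCost n f : ℤ) := by
          rw [← hcostB, Nat.cast_sum]
        rw [hc2, hm]
        ring
      have hRHS : ∑ i ∈ B, ((q : ℤ) - 1)
          * (((if f (i : ZMod n) = q then 2 * q + 1 else f (i : ZMod n) + 1 : ℕ)) : ℤ)
          ≤ ((q : ℤ) - 1) * n := by
        rw [← Finset.mul_sum]
        apply mul_le_mul_of_nonneg_left ?_ (by linarith : (0 : ℤ) ≤ (q : ℤ) - 1)
        calc (∑ i ∈ B, (((if f (i : ZMod n) = q then 2 * q + 1 else f (i : ZMod n) + 1 : ℕ)) : ℤ))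
            = ((∑ i ∈ B, (if f (i : ZMod n) = q then 2 * q + 1 else f (i : ZMod n) + 1) : ℕ) : ℤ) := by
              rw [Nat.cast_sum]
          _ ≤ (n : ℤ) := by exact_mod_cast hsum
      rw [hLHS] at hsumZ
      linarith
    have hfin1 : (q : ℤ) * (circCost n f : ℤ)
        ≤ ((q : ℤ) - 1) * ((n : ℤ) - m) - (q : ℤ) * ((q : ℤ) - 2) * m := by
      have he : ((q : ℤ) - 1) * ((n : ℤ) - m) - (q : ℤ) * ((q : ℤ) - 2) * m
          = ((q : ℤ) - 1) * n - ((q : ℤ) * (q : ℤ) - q - 1) * m := by ring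
      rw [he]
      linarith
    calc (circCost n f : ℤ)
        ≤ (((q : ℤ) - 1) * ((n : ℤ) - (m : ℤ)) + (-(((q : ℤ) - 2) * m)) * q) / q := by
          rw [Int.le_ediv_iff_mul_le hqZ]
          have he2 : ((q : ℤ) - 1) * ((n : ℤ) - m) + (-(((q : ℤ) - 2) * m)) * q
              = ((q : ℤ) - 1) * ((n : ℤ) - m) - (q : ℤ) * ((q : ℤ) - 2) * m := by ring
          have hcomm : (circCost n f : ℤ) * q = (q : ℤ) * (circCost n f : ℤ) := mul_comm _ _
          rw [he2, hcomm]
          exact hfin1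
      _ = ((q : ℤ) - 1) * ((n : ℤ) - (m : ℤ)) / q + (-(((q : ℤ) - 2) * m)) :=
          Int.add_mul_ediv_right _ _ (ne_of_gt hqZ)
      _ = ((q : ℤ) - 1) * ((n : ℤ) - (m : ℤ)) / q - ((q : ℤ) - 2) * m := by ring
end

section
/- If n = k(a-1) with a ≥ 4 and k ≥ 3, then the broadcast independence number of the oriented circulant graph C⃗(n;1,a) equals (a-2)k. -/
section basic
variable {n : ℕ} {a : ℤ}

lemma steps_refl (u : ZMod n) : circSteps n a u u 0 :=
  ⟨fun _ => u, rfl, rfl, fun i hi => absurd hi (Nat.not_lt_zero i)⟩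

lemma steps_succ {u v w : ZMod n} {j : ℕ} (h : circSteps n a u v j)
    (harc : circArc n a v w) : circSteps n a u w (j + 1) := by
  obtain ⟨g, h0, hj, hs⟩ := h
  refine ⟨fun i => if i = j + 1 then w else g i, by simp only []; rw [if_neg (by omega : ¬ (0:ℕ) = j+1)]; exact h0, by simp, ?_⟩
  intro i hi
  rcases Nat.lt_or_ge i j with hij | hij
  · simp only [if_neg (by omega : ¬ i = j+1), if_neg (by omega : ¬ i+1 = j+1)]
    exact hs i hij
  · have : i = j := by omega
    subst this
    simp only [if_neg (by omega : ¬ i = i+1), if_pos rfl, hj]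
    exact harc

lemma steps_init {u v : ZMod n} {j : ℕ} (h : circSteps n a u v (j+1)) :
    ∃ w, circSteps n a u w j ∧ circArc n a w v := by
  obtain ⟨g, h0, hj, hs⟩ := h
  exact ⟨g j, ⟨g, h0, rfl, fun i hi => hs i (by omega)⟩, hj ▸ hs j (by omega)⟩

lemma steps_eq_of_zero {u v : ZMod n} (h : circSteps n a u v 0) : u = v := by
  obtain ⟨g, h0, hj, _⟩ := h; rw [← h0, ← hj]

end basic

section natA
variable {n a : ℕ}

lemma arc_one (u : ZMod n) : circArc n (a : ℤ) u (u + 1) := Or.inl rfl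

lemma arc_a (u : ZMod n) : circArc n (a : ℤ) u (u + (a : ZMod n)) := by
  right; push_cast; ring_nf

lemma steps_shift (u : ZMod n) (s t : ℕ) :
    circSteps n (a : ℤ) u (u + ((s + t * a : ℕ) : ZMod n)) (s + t) := by
  induction t with
  | zero =>
    induction s with
    | zero => simpa using steps_refl u
    | succ s ih =>
      have := steps_succ ih (arc_one (a := a) _)
      simpa [add_assoc, Nat.cast_add] using this
  | succ t ih =>
    have := steps_succ ih (arc_a (a := a) _)
    have he : ((s + t * a : ℕ) : ZMod n) + (a : ZMod n) = ((s + (t+1) * a : ℕ) : ZMod n) := by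
      push_cast; ring
    rw [add_assoc, he] at this
    simpa [add_assoc] using this

lemma steps_to [NeZero n] (u v : ZMod n) :
    circSteps n (a : ℤ) u v ((v - u).val / a + (v - u).val % a) := by
  have h := steps_shift (n := n) (a := a) u ((v - u).val % a) ((v - u).val / a)
  have he : (((v - u).val % a + (v - u).val / a * a : ℕ) : ZMod n) = v - u := by
    rw [Nat.mod_add_div']
    exact ZMod.natCast_zmod_val _
  rw [he] at h
  simpa [add_comm] using h

lemma dist_le [NeZero n] (u v : ZMod n) :
    circDist n (a : ℤ) u v ≤ (v - u).val / a + (v - u).val % a :=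
  Nat.sInf_le (steps_to u v)

lemma dist_steps_nonempty [NeZero n] (u v : ZMod n) : {j | circSteps n (a : ℤ) u v j}.Nonempty :=
  ⟨_, steps_to u v⟩

end natA

section modinv
variable {n a k : ℕ}

lemma hdvd' (hn : n = k * (a - 1)) : (a - 1) ∣ n := hn ▸ Dvd.intro_left k rfl

lemma a_cast_eq_one (ha : 4 ≤ a) : ((a : ℕ) : ZMod (a - 1)) = 1 := by
  have h1 : a = (a - 1) + 1 := by omega
  rw [h1]; push_cast; simp

lemma steps_mod (hn : n = k * (a - 1)) (ha : 4 ≤ a) {u v : ZMod n} {j : ℕ}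
    (h : circSteps n (a : ℤ) u v j) :
    (ZMod.castHom (hdvd' hn) (ZMod (a - 1))) (v - u) = (j : ZMod (a - 1)) := by
  induction j generalizing v with
  | zero =>
    have := steps_eq_of_zero h
    subst this; simp
  | succ j ih =>
    obtain ⟨w, hw, harc⟩ := steps_init h
    have hsub : v - u = (v - w) + (w - u) := by ring
    have h2 : (ZMod.castHom (hdvd' hn) (ZMod (a - 1))) (v - w) = 1 := by
      rcases harc with h1 | h1
      · rw [h1]
        have he : w + 1 - w = 1 := by ring
        rw [he, map_one]
      · rw [h1]
        have : w + ((a:ℤ) : ZMod n) - w = (((a : ℕ) : ℤ) : ZMod n) := by ring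
        rw [this]
        push_cast
        rw [map_natCast]
        exact a_cast_eq_one ha
    rw [hsub, map_add, h2, ih hw]
    push_cast; ring

lemma dist_ge (hn : n = k * (a - 1)) (ha : 4 ≤ a) [NeZero n] {u v : ZMod n}
    (huv : u ≠ v)
    (hzero : (ZMod.castHom (hdvd' hn) (ZMod (a - 1))) (v - u) = 0) :
    a - 1 ≤ circDist n (a : ℤ) u v := by
  have hmem := Nat.sInf_mem (dist_steps_nonempty (a := a) u v)
  set d := sInf {j | circSteps n (a:ℤ) u v j} with hd
  have hdist : circDist n (a:ℤ) u v = d := rfl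
  have hmod := steps_mod hn ha hmem
  rw [hzero] at hmod
  have hdv : (a - 1) ∣ d := by
    rwa [eq_comm, ZMod.natCast_eq_zero_iff] at hmod
  have hd0 : d ≠ 0 := by
    intro h0
    rw [h0] at hmem
    exact huv (steps_eq_of_zero hmem)
  rw [hdist]
  exact Nat.le_of_dvd (Nat.pos_of_ne_zero hd0) hdv

lemma arith1 (hn : n = k * (a - 1)) (ha : 4 ≤ a) (hk : 3 ≤ k) :
    ∀ x, x < n → x / a + x % a ≤ a + k - 3 := by
  intro x hx
  have ha0 : 0 < a := by omega
  have hdm := Nat.div_add_mod x a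
  set q := x / a with hqq
  set r := x % a with hrr
  have hr : r < a := Nat.mod_lt _ ha0
  have hmul : k * (a - 1) + k = k * a := by
    rw [← Nat.mul_succ]; congr 1; omega
  have hlin : a * q + r + k ≤ k * a := by
    have : x + k ≤ k * a := by omega
    omega
  have hq1 : q < k := by
    have h1 : a * q < a * k := by
      have : a * q + r + k ≤ a * k := by rw [mul_comm a k]; exact hlin
      omega
    exact Nat.lt_of_mul_lt_mul_left h1
  rcases Nat.lt_or_ge r (a - 1) with hcase | hcase
  · omega
  · have hre : r = a - 1 := by omega
    have hq2 : q + 1 < k := by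
      have h1 : a * (q + 1) < a * k := by
        have h2 : a * (q + 1) = a * q + a := by ring
        have : a * q + r + k ≤ a * k := by rw [mul_comm a k]; exact hlin
        omega
      exact Nat.lt_of_mul_lt_mul_left h1
    omega

lemma ecc_le (hn : n = k * (a - 1)) (ha : 4 ≤ a) (hk : 3 ≤ k) [NeZero n] (u : ZMod n) :
    circEcc n (a : ℤ) u ≤ a + k - 3 := by
  rw [circEcc]
  refine csSup_le ?_ ?_
  · exact ⟨circDist n (a:ℤ) u u, u, rfl⟩
  rintro b ⟨v, rfl⟩
  exact le_trans (dist_le u v) (arith1 hn ha hk _ (ZMod.val_lt _))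

lemma bdd_dist (hn : n = k * (a - 1)) (ha : 4 ≤ a) (hk : 3 ≤ k) [NeZero n] (u : ZMod n) :
    BddAbove {d | ∃ v, d = circDist n (a : ℤ) u v} := by
  refine ⟨a + k - 3, ?_⟩
  rintro b ⟨v, rfl⟩
  exact le_trans (dist_le u v) (arith1 hn ha hk _ (ZMod.val_lt _))

lemma ecc_ge (hn : n = k * (a - 1)) (ha : 4 ≤ a) (hk : 3 ≤ k) [NeZero n] (u : ZMod n) :
    a - 1 ≤ circEcc n (a : ℤ) u := by
  set v := u + ((a - 1 : ℕ) : ZMod n) with hv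
  have han : a - 1 < n := by
    have h3 : 3 * (a - 1) ≤ k * (a - 1) := Nat.mul_le_mul_right _ hk
    omega
  have huv : u ≠ v := by
    intro h
    have h0 : ((a - 1 : ℕ) : ZMod n) = 0 := by
      rw [hv] at h
      exact (left_eq_add.mp h)
    rw [ZMod.natCast_eq_zero_iff] at h0
    have := Nat.le_of_dvd (by omega) h0
    omega
  have hzero : (ZMod.castHom (hdvd' hn) (ZMod (a - 1))) (v - u) = 0 := by
    rw [hv, add_sub_cancel_left, map_natCast]
    simp
  have hd := dist_ge hn ha huv hzero
  calc a - 1 ≤ circDist n (a:ℤ) u v := hd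
  _ ≤ circEcc n (a:ℤ) u := by
    rw [circEcc]; exact le_csSup (bdd_dist hn ha hk u) ⟨v, rfl⟩

end modinv

section lowerbound
variable {n a k : ℕ}

noncomputable def fZero (n a : ℕ) : ZMod n → ℕ :=
  fun v => if (a - 1) ∣ v.val then a - 2 else 0

lemma fZero_indep (hn : n = k * (a - 1)) (ha : 4 ≤ a) (hk : 3 ≤ k) [NeZero n] :
    IsIndepBroadcast n (a : ℤ) (fZero n a) := by
  constructor
  · intro v
    rw [fZero]
    by_cases h : (a - 1) ∣ v.val
    · rw [if_pos h]
      calc a - 2 ≤ a - 1 := by omega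
      _ ≤ circEcc n (a:ℤ) v := ecc_ge hn ha hk v
    · rw [if_neg h]; exact Nat.zero_le _
  · intro u v hne hu hv
    have hdu : (a - 1) ∣ u.val := by
      by_contra h; rw [fZero, if_neg h] at hu; omega
    have hdv : (a - 1) ∣ v.val := by
      by_contra h; rw [fZero, if_neg h] at hv; omega
    have hfu : fZero n a u = a - 2 := by rw [fZero, if_pos hdu]
    have hcast : ∀ w : ZMod n, (a - 1) ∣ w.val →
        (ZMod.castHom (hdvd' hn) (ZMod (a - 1))) w = 0 := by
      intro w hw
      conv_lhs => rw [← ZMod.natCast_zmod_val w]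
      rw [map_natCast]
      rwa [ZMod.natCast_eq_zero_iff]
    have hzero : (ZMod.castHom (hdvd' hn) (ZMod (a - 1))) (v - u) = 0 := by
      rw [map_sub, hcast v hdv, hcast u hdu, sub_zero]
    have := dist_ge hn ha hne hzero
    omega

lemma sum_if_dvd (m c : ℕ) (hm : 0 < m) :
    ∀ K : ℕ, ∑ i ∈ Finset.range (K * m), (if m ∣ i then c else 0) = c * K := by
  intro K
  induction K with
  | zero => simp
  | succ K ih =>
    have h1 : (K + 1) * m = K * m + m := by ring
    rw [h1, Finset.sum_range_add, ih]
    have h2 : ∀ x ∈ Finset.range m,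
        (if m ∣ (K * m + x) then c else 0) = if x = 0 then c else 0 := by
      intro x hx
      rw [Finset.mem_range] at hx
      have hKm : m ∣ K * m := Dvd.intro K (mul_comm m K)
      have hdd : m ∣ K * m + x ↔ m ∣ x := Nat.dvd_add_right hKm
      by_cases hx0 : x = 0
      · subst hx0; simp
      · rw [if_neg hx0, if_neg]
        rw [hdd]
        intro h
        have := Nat.le_of_dvd (by omega) h
        omega
    rw [Finset.sum_congr rfl h2]
    rw [Finset.sum_ite_eq' (Finset.range m) 0 (fun _ => c)]
    rw [if_pos (Finset.mem_range.mpr hm)]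
    ring

lemma fZero_cost (hn : n = k * (a - 1)) (ha : 4 ≤ a) (hk : 3 ≤ k) [NeZero n] :
    circCost n (fZero n a) = (a - 2) * k := by
  rw [circCost]
  have h1 : ∀ i ∈ Finset.range n, fZero n a (i : ZMod n) = if (a-1) ∣ i then a - 2 else 0 := by
    intro i hi
    rw [Finset.mem_range] at hi
    rw [fZero, ZMod.val_cast_of_lt hi]
  rw [Finset.sum_congr rfl h1, hn, sum_if_dvd (a-1) (a-2) (by omega) k]

end lowerbound

section upperbound
variable {n a k : ℕ}

lemma arithA (a f g : ℕ) (ha : 4 ≤ a) (h : f + 1 ≤ g / a + g % a) :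
    g ≤ (a - 1) * (g - f) := by
  have ha0 : 0 < a := by omega
  have hdm := Nat.div_add_mod g a
  set t := g / a with ht
  set r := g % a with hr
  have hra : r < a := Nat.mod_lt _ ha0
  have e1 : (a - 1) * t + t = a * t := by
    have e : a - 1 + 1 = a := by omega
    calc (a - 1) * t + t = ((a - 1) + 1) * t := by ring
    _ = a * t := by rw [e]
  have h1 : (a - 1) * t + 1 + f ≤ g := by linarith
  have h2 : (a - 1) * t + 1 ≤ g - f := Nat.le_sub_of_add_le h1
  have h3 : (a - 1) * ((a - 1) * t + 1) ≤ (a - 1) * (g - f) :=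
    Nat.mul_le_mul_left _ h2
  have k1 : 3 * (a - 1) ≤ (a - 1) * (a - 1) := Nat.mul_le_mul_right _ (by omega)
  have k2 : a ≤ 3 * (a - 1) := by omega
  have k3 : a * t ≤ (a - 1) * (a - 1) * t := Nat.mul_le_mul_right t (by omega)
  have e2 : (a - 1) * ((a - 1) * t + 1) = (a - 1) * (a - 1) * t + (a - 1) := by ring
  have : g ≤ (a - 1) * ((a - 1) * t + 1) := by
    rw [e2]; omega
  linarith

lemma arithB (hn : n = k * (a - 1)) (ha : 4 ≤ a) (hk : 3 ≤ k) {f : ℕ}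
    (hf : f ≤ a + k - 3) : n ≤ (a - 1) * (n - f) := by
  have e0 : a - 1 = (a - 3) + 2 := by omega
  have e1 : k * (a - 1) = k * (a - 3) + 2 * k := by
    rw [e0, Nat.mul_add]; ring
  have e2 : 3 * (a - 3) ≤ k * (a - 3) := Nat.mul_le_mul_right _ hk
  have hfn : f + k ≤ n := by omega
  have hZ : k ≤ n - f := by omega
  have h3 : (a - 1) * k ≤ (a - 1) * (n - f) := Nat.mul_le_mul_left _ hZ
  have h4 : n = (a - 1) * k := by rw [hn, mul_comm]
  omega

lemma cast_inj_Icc [NeZero n] {j1 j2 : ℕ} (h1 : j1 ∈ Finset.Icc 1 n)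
    (h2 : j2 ∈ Finset.Icc 1 n) (hc : (j1 : ZMod n) = (j2 : ZMod n)) : j1 = j2 := by
  rw [ZMod.natCast_eq_natCast_iff] at hc
  simp only [Finset.mem_Icc] at h1 h2
  unfold Nat.ModEq at hc
  rcases eq_or_lt_of_le h1.2 with e1 | l1 <;> rcases eq_or_lt_of_le h2.2 with e2 | l2
  · omega
  · subst e1; rw [Nat.mod_self, Nat.mod_eq_of_lt l2] at hc; omega
  · subst e2; rw [Nat.mod_self, Nat.mod_eq_of_lt l1] at hc; omega
  · rw [Nat.mod_eq_of_lt l1, Nat.mod_eq_of_lt l2] at hc; omega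

lemma cast_inj_lt [NeZero n] {j1 j2 : ℕ} (h1 : j1 < n) (h2 : j2 < n)
    (hc : (j1 : ZMod n) = (j2 : ZMod n)) : j1 = j2 := by
  have := congrArg ZMod.val hc
  rwa [ZMod.val_cast_of_lt h1, ZMod.val_cast_of_lt h2] at this

lemma cost_le (hn : n = k * (a - 1)) (ha : 4 ≤ a) (hk : 3 ≤ k) [NeZero n]
    (f : ZMod n → ℕ) (hf : IsIndepBroadcast n (a : ℤ) f) :
    circCost n f ≤ (a - 2) * k := by
  classical
  have hn0 : 0 < n := Nat.pos_of_ne_zero (NeZero.ne n)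
  set P : Finset (ZMod n) := Finset.univ.filter (fun v => 0 < f v) with hP
  have hcost : circCost n f = ∑ v ∈ P, f v := by
    rw [circCost]
    have huniv : (Finset.univ : Finset (ZMod n)) = (Finset.range n).image (fun i : ℕ => (i : ZMod n)) := by
      symm
      apply Finset.eq_univ_of_forall
      intro x
      rw [Finset.mem_image]
      exact ⟨x.val, Finset.mem_range.mpr (ZMod.val_lt x), ZMod.natCast_zmod_val x⟩
    have h1 : ∑ i ∈ Finset.range n, f (i : ZMod n) = ∑ v : ZMod n, f v := by
      rw [huniv, Finset.sum_image]
      intro x hx y hy hxy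
      exact cast_inj_lt (Finset.mem_range.mp hx) (Finset.mem_range.mp hy) hxy
    rw [h1]
    symm
    apply Finset.sum_subset (Finset.filter_subset _ _)
    intro v _ hv
    rw [Finset.mem_filter] at hv
    push_neg at hv
    have := hv (Finset.mem_univ v)
    omega
  rcases P.eq_empty_or_nonempty with hPe | ⟨i₀, hi₀⟩
  · rw [hcost, hPe]; simp
  · have hfi₀ : 0 < f i₀ := (Finset.mem_filter.mp hi₀).2
    -- forward gap
    have hex : ∀ v : ZMod n, ∃ j : ℕ, 0 < j ∧ 0 < f (v + (j : ZMod n)) := by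
      intro v
      by_cases hv : v = i₀
      · exact ⟨n, hn0, by rw [ZMod.natCast_self, add_zero, hv]; exact hfi₀⟩
      · refine ⟨(i₀ - v).val, ?_, ?_⟩
        · rw [ZMod.val_pos]; exact sub_ne_zero.mpr (Ne.symm hv)
        · rw [ZMod.natCast_zmod_val, add_sub_cancel]; exact hfi₀
    set g : ZMod n → ℕ := fun v => Nat.find (hex v) with hgdef
    have g_pos : ∀ v, 0 < g v := fun v => (Nat.find_spec (hex v)).1
    have g_spec : ∀ v, 0 < f (v + (g v : ZMod n)) := fun v => (Nat.find_spec (hex v)).2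
    have g_min : ∀ v j, 0 < j → j < g v → ¬ 0 < f (v + (j : ZMod n)) := by
      intro v j hj hlt hpos
      exact Nat.find_min (hex v) hlt ⟨hj, hpos⟩
    have g_le : ∀ v ∈ P, g v ≤ n := by
      intro v hv
      apply Nat.find_min'
      refine ⟨hn0, ?_⟩
      rw [ZMod.natCast_self, add_zero]
      exact (Finset.mem_filter.mp hv).2
    -- backward gap
    have hexb : ∀ x : ZMod n, ∃ j : ℕ, 0 < j ∧ 0 < f (x - (j : ZMod n)) := by
      intro x
      by_cases hv : x = i₀
      · exact ⟨n, hn0, by rw [ZMod.natCast_self, sub_zero, hv]; exact hfi₀⟩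
      · refine ⟨(x - i₀).val, ?_, ?_⟩
        · rw [ZMod.val_pos]; exact sub_ne_zero.mpr hv
        · rw [ZMod.natCast_zmod_val, sub_sub_cancel]; exact hfi₀
    set b : ZMod n → ℕ := fun x => Nat.find (hexb x) with hbdef
    have b_pos : ∀ x, 0 < b x := fun x => (Nat.find_spec (hexb x)).1
    have b_spec : ∀ x, 0 < f (x - (b x : ZMod n)) := fun x => (Nat.find_spec (hexb x)).2
    have b_min : ∀ x j, 0 < j → j < b x → ¬ 0 < f (x - (j : ZMod n)) := by
      intro x j hj hlt hpos
      exact Nat.find_min (hexb x) hlt ⟨hj, hpos⟩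
    have iStar_mem : ∀ x : ZMod n, x - (b x : ZMod n) ∈ P := by
      intro x
      exact Finset.mem_filter.mpr ⟨Finset.mem_univ _, b_spec x⟩
    have b_le_g : ∀ x : ZMod n, b x ≤ g (x - (b x : ZMod n)) := by
      intro x
      by_contra hlt
      push_neg at hlt
      set i := x - (b x : ZMod n) with hi
      have h1 : 0 < f (i + (g i : ZMod n)) := g_spec i
      have e : i + (g i : ZMod n) = x - ((b x - g i : ℕ) : ZMod n) := by
        have e2 : ((b x - g i : ℕ) : ZMod n) = (b x : ZMod n) - (g i : ZMod n) := by
          have : (b x - g i) + g i = b x := by omega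
          calc ((b x - g i : ℕ) : ZMod n)
              = ((b x - g i : ℕ) : ZMod n) + (g i : ZMod n) - (g i : ZMod n) := by ring
          _ = (((b x - g i) + g i : ℕ) : ZMod n) - (g i : ZMod n) := by push_cast; ring
          _ = (b x : ZMod n) - (g i : ZMod n) := by rw [this]
        rw [hi, e2]; ring
      rw [e] at h1
      exact b_min x (b x - g i) (by have := g_pos i; omega) (by have := g_pos i; omega) h1
    -- the arcs
    set A : ZMod n → Finset (ZMod n) :=
      fun v => (Finset.Icc 1 (g v)).image (fun j : ℕ => v + (j : ZMod n)) with hA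
    have card_A : ∀ v ∈ P, (A v).card = g v := by
      intro v hv
      rw [hA]
      rw [Finset.card_image_of_injOn, Nat.card_Icc]
      · omega
      · intro j1 h1 j2 h2 hc
        simp only [Finset.coe_Icc, Set.mem_Icc] at h1 h2
        have hgn := g_le v hv
        have := add_left_cancel hc
        exact cast_inj_Icc (Finset.mem_Icc.mpr ⟨h1.1, le_trans h1.2 hgn⟩)
          (Finset.mem_Icc.mpr ⟨h2.1, le_trans h2.2 hgn⟩) this
    have unique_arc : ∀ x : ZMod n, ∀ v ∈ P, x ∈ A v → v = x - (b x : ZMod n) := by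
      intro x v hv hxA
      rw [hA, Finset.mem_image] at hxA
      obtain ⟨j, hj, hvj⟩ := hxA
      rw [Finset.mem_Icc] at hj
      have hj1 := hj.1
      have hj2 := hj.2
      have hxv : x - (j : ZMod n) = v := by rw [← hvj]; ring
      have hbj : b x ≤ j := by
        apply Nat.find_min'
        refine ⟨by omega, ?_⟩
        rw [hxv]
        exact (Finset.mem_filter.mp hv).2
      rcases eq_or_lt_of_le hbj with heq | hlt
      · rw [← hxv, heq]
      · exfalso
        have hbx := b_pos x
        have hj' : 0 < j - b x := by omega
        have e : v + ((j - b x : ℕ) : ZMod n) = x - (b x : ZMod n) := by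
          have e2 : ((j - b x : ℕ) : ZMod n) = (j : ZMod n) - (b x : ZMod n) := by
            have hh : (j - b x) + b x = j := by omega
            calc ((j - b x : ℕ) : ZMod n)
                = ((j - b x : ℕ) : ZMod n) + (b x : ZMod n) - (b x : ZMod n) := by ring
            _ = (((j - b x) + b x : ℕ) : ZMod n) - (b x : ZMod n) := by push_cast; ring
            _ = (j : ZMod n) - (b x : ZMod n) := by rw [hh]
          rw [← hxv, e2]; ring
        have hpos : 0 < f (v + ((j - b x : ℕ) : ZMod n)) := by rw [e]; exact b_spec x
        exact g_min v (j - b x) hj' (by omega) hpos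
    have mem_arc : ∀ x : ZMod n, x ∈ A (x - (b x : ZMod n)) := by
      intro x
      rw [hA, Finset.mem_image]
      refine ⟨b x, Finset.mem_Icc.mpr ⟨b_pos x, b_le_g x⟩, by ring⟩
    have biUnion_eq : P.biUnion A = Finset.univ := by
      apply Finset.eq_univ_of_forall
      intro x
      rw [Finset.mem_biUnion]
      exact ⟨x - (b x : ZMod n), iStar_mem x, mem_arc x⟩
    have sum_g : ∑ v ∈ P, g v = n := by
      have hdisj : ∀ v1 ∈ P, ∀ v2 ∈ P, v1 ≠ v2 → Disjoint (A v1) (A v2) := by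
        intro v1 h1 v2 h2 hne
        rw [Finset.disjoint_left]
        intro x hx1 hx2
        exact hne ((unique_arc x v1 h1 hx1).trans (unique_arc x v2 h2 hx2).symm)
      have h1 := Finset.card_biUnion hdisj
      rw [biUnion_eq, Finset.card_univ, ZMod.card] at h1
      exact (Finset.sum_congr rfl card_A).symm.trans h1.symm
    -- per-element inequality
    have per_elem : ∀ v ∈ P, g v ≤ (a - 1) * (g v - f v) := by
      intro v hv
      have hfv : 0 < f v := (Finset.mem_filter.mp hv).2
      by_cases hz : ((g v : ℕ) : ZMod n) = 0
      · have hgn : g v = n := by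
          rw [ZMod.natCast_eq_zero_iff] at hz
          have := Nat.le_of_dvd (g_pos v) hz
          have := g_le v hv
          omega
        rw [hgn]
        exact arithB hn ha hk (le_trans (hf.1 v) (ecc_le hn ha hk v))
      · have hwv : v ≠ v + ((g v : ℕ) : ZMod n) := by
          intro h
          exact hz (left_eq_add.mp h)
        have hd := hf.2 v _ hwv hfv (g_spec v)
        have hgvn : g v < n := by
          rcases eq_or_lt_of_le (g_le v hv) with h | h
          · exfalso; apply hz; rw [h, ZMod.natCast_self]
          · omega
        have hval : (v + ((g v : ℕ) : ZMod n) - v).val = g v := by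
          have e : v + ((g v : ℕ) : ZMod n) - v = ((g v : ℕ) : ZMod n) := by ring
          rw [e, ZMod.val_cast_of_lt hgvn]
        have hdle := dist_le (a := a) v (v + ((g v : ℕ) : ZMod n))
        rw [hval] at hdle
        exact arithA a (f v) (g v) ha (by omega)
      -- end cases
    -- assemble
    have hfg : ∀ v ∈ P, f v ≤ g v := by
      intro v hv
      by_contra hgt
      push_neg at hgt
      have h0 : g v - f v = 0 := by omega
      have := per_elem v hv
      rw [h0, Nat.mul_zero] at this
      have := g_pos v
      omega
    have sum_split : ∑ v ∈ P, f v + ∑ v ∈ P, (g v - f v) = n := by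
      have h2 : ∑ v ∈ P, (f v + (g v - f v)) = ∑ v ∈ P, g v :=
        Finset.sum_congr rfl (fun v hv => by have := hfg v hv; omega)
      rw [← Finset.sum_add_distrib, h2, sum_g]
    have hSd : k ≤ ∑ v ∈ P, (g v - f v) := by
      have h1 : ∑ v ∈ P, g v ≤ ∑ v ∈ P, (a - 1) * (g v - f v) :=
        Finset.sum_le_sum per_elem
      rw [← Finset.mul_sum] at h1
      rw [sum_g] at h1
      have h2 : (a - 1) * k ≤ (a - 1) * (∑ v ∈ P, (g v - f v)) := by
        rw [mul_comm (a-1) k, ← hn]; exact h1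
      exact Nat.le_of_mul_le_mul_left h2 (by omega)
    have e : k * (a - 1) = k * (a - 2) + k := by
      have h : a - 1 = (a - 2) + 1 := by omega
      rw [h, Nat.mul_add, mul_one]
    rw [hcost]
    have : n = k * (a - 2) + k := by rw [hn, e]
    have efin : (a - 2) * k = k * (a - 2) := mul_comm _ _
    omega

end upperbound

theorem stmt17 (n a k : ℕ) (hn : n = k * (a - 1)) (ha : 4 ≤ a) (hk : 3 ≤ k) :
    betaB n (a : ℤ) = (a - 2) * k := by
  haveI : NeZero n := ⟨by
    subst hn
    exact Nat.mul_ne_zero (by omega) (by omega)⟩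
  have hmem : ((a - 2) * k : ℕ) ∈
      {c | ∃ f : ZMod n → ℕ, IsIndepBroadcast n (a : ℤ) f ∧ c = circCost n f} :=
    ⟨fZero n a, fZero_indep hn ha hk, (fZero_cost hn ha hk).symm⟩
  have hbdd : ∀ c ∈ {c | ∃ f : ZMod n → ℕ, IsIndepBroadcast n (a : ℤ) f ∧ c = circCost n f},
      c ≤ (a - 2) * k := by
    rintro c ⟨f, hf, rfl⟩
    exact cost_le hn ha hk f hf
  rw [betaB]
  apply le_antisymm
  · exact csSup_le ⟨_, hmem⟩ hbdd
  · exact le_csSup ⟨(a - 2) * k, hbdd⟩ hmem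
end
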